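/- For n ≥ 2, ζ = 2π/n, α ≥ 1, and integers k ≥ 1: s_{k+1} - 2s_k + s_{k-1} = 2s₁ - s̄_k, where s_k and s̄_k are as defined. -/

import Mathlib

open Finset


lemma trig_id (x y : ℝ) :
    Real.sin (y + x) ^ 2 - 2 * Real.sin y ^ 2 + Real.sin (y - x) ^ 2
      = 2 * Real.sin x ^ 2 - 4 * Real.sin y ^ 2 * Real.sin x ^ 2 := by
  have h1 := Real.sin_sq_add_cos_sq x
  have h2 := Real.sin_sq_add_cos_sq y
  rw [Real.sin_add, Real.sin_sub]
  nlinarith [h1, h2]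

lemma term_id (x : ℝ) (hx : 0 < Real.sin x) (α : ℝ) (y : ℝ) :
    Real.sin (y + x) ^ 2 / Real.sin x ^ (α + 1)
      - 2 * (Real.sin y ^ 2 / Real.sin x ^ (α + 1))
      + Real.sin (y - x) ^ 2 / Real.sin x ^ (α + 1)
    = 2 * (Real.sin x ^ 2 / Real.sin x ^ (α + 1))
      - 4 * (Real.sin y ^ 2 / Real.sin x ^ (α - 2 + 1)) := by
  have hsplit : Real.sin x ^ (α + 1) = Real.sin x ^ (α - 1) * Real.sin x ^ 2 := by
    rw [show α + 1 = (α - 1) + 2 by ring, Real.rpow_add hx,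
      ← Real.rpow_natCast (Real.sin x) 2]
    norm_num
  have hq : Real.sin x ^ (α - 1) ≠ 0 := (Real.rpow_pos_of_pos hx _).ne'
  rw [show α - 2 + 1 = α - 1 by ring, hsplit]
  have hs : Real.sin x ≠ 0 := hx.ne'
  field_simp
  linear_combination trig_id x y

/-- The sum `s_k = 2^{-α} Σ_{j=1}^{n-1} sin²(kjζ/2)/sin^{α+1}(jζ/2)` with `ζ = 2π/n`. -/
noncomputable def sSum (n : ℕ) (α : ℝ) (k : ℕ) : ℝ :=
  2 ^ (-α) * ∑ j ∈ Finset.Icc 1 (n - 1),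
    Real.sin (k * j * (2 * Real.pi / n) / 2) ^ 2 /
      Real.sin (j * (2 * Real.pi / n) / 2) ^ (α + 1)

theorem stmt9 (n : ℕ) (hn : 2 ≤ n) (α : ℝ) (hα : 1 ≤ α) (k : ℕ) (hk : 1 ≤ k) :
    sSum n α (k + 1) - 2 * sSum n α k + sSum n α (k - 1)
      = 2 * sSum n α 1 - sSum n (α - 2) k := by
  have hnR : (0:ℝ) < n := by
    have : (0:ℕ) < n := by omega
    exact_mod_cast this
  have hsin : ∀ j ∈ Finset.Icc 1 (n-1), 0 < Real.sin ((j:ℝ) * (2 * Real.pi / n) / 2) := by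
    intro j hj
    simp only [Finset.mem_Icc] at hj
    have h1 : (1:ℝ) ≤ j := by exact_mod_cast hj.1
    have h2 : (j:ℝ) < n := by
      have : j < n := by omega
      exact_mod_cast this
    have harg : (j:ℝ) * (2 * Real.pi / n) / 2 = j * Real.pi / n := by ring
    rw [harg]
    apply Real.sin_pos_of_pos_of_lt_pi
    · positivity
    · rw [div_lt_iff₀ hnR]
      nlinarith [Real.pi_pos]
  unfold sSum
  have h2 : (2:ℝ) ^ (-(α-2)) = 2 ^ (-α) * 4 := by
    rw [show -(α-2) = -α + 2 by ring, Real.rpow_add two_pos]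
    norm_num
  rw [h2]
  have key : ∑ j ∈ Finset.Icc 1 (n-1),
      (Real.sin ((k+1 : ℕ) * j * (2 * Real.pi / n) / 2) ^ 2 /
          Real.sin (j * (2 * Real.pi / n) / 2) ^ (α + 1)
        - 2 * (Real.sin ((k : ℕ) * j * (2 * Real.pi / n) / 2) ^ 2 /
          Real.sin (j * (2 * Real.pi / n) / 2) ^ (α + 1))
        + Real.sin ((k-1 : ℕ) * j * (2 * Real.pi / n) / 2) ^ 2 /
          Real.sin (j * (2 * Real.pi / n) / 2) ^ (α + 1))
      = ∑ j ∈ Finset.Icc 1 (n-1),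
      (2 * (Real.sin ((1 : ℕ) * j * (2 * Real.pi / n) / 2) ^ 2 /
          Real.sin (j * (2 * Real.pi / n) / 2) ^ (α + 1))
        - 4 * (Real.sin ((k : ℕ) * j * (2 * Real.pi / n) / 2) ^ 2 /
          Real.sin (j * (2 * Real.pi / n) / 2) ^ (α - 2 + 1))) := by
    refine Finset.sum_congr rfl (fun j hj => ?_)
    have hx := hsin j hj
    have hid := term_id ((j:ℝ) * (2 * Real.pi / n) / 2) hx α
      ((k:ℝ) * ((j:ℝ) * (2 * Real.pi / n) / 2))
    have e1 : ((k:ℝ) * ((j:ℝ) * (2 * Real.pi / n) / 2)) + (j:ℝ) * (2 * Real.pi / n) / 2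
        = ((k+1 : ℕ) : ℝ) * j * (2 * Real.pi / n) / 2 := by push_cast; ring
    have e2 : ((k:ℝ) * ((j:ℝ) * (2 * Real.pi / n) / 2)) - (j:ℝ) * (2 * Real.pi / n) / 2
        = ((k-1 : ℕ) : ℝ) * j * (2 * Real.pi / n) / 2 := by
      push_cast [Nat.cast_sub hk]; ring
    have e3 : ((k:ℝ) * ((j:ℝ) * (2 * Real.pi / n) / 2))
        = ((k : ℕ) : ℝ) * j * (2 * Real.pi / n) / 2 := by ring
    have e4 : ((1 : ℕ) : ℝ) * j * (2 * Real.pi / n) / 2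
        = (j:ℝ) * (2 * Real.pi / n) / 2 := by push_cast; ring
    rw [e1, e2, e3] at hid
    rw [e4, hid]
  simp only [Finset.sum_add_distrib, Finset.sum_sub_distrib, ← Finset.mul_sum] at key
  linear_combination (2:ℝ) ^ (-α) * key
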